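/- Let C be a top-connected set of relations, X a C-pattern in P_C^+(λ,μ) whose tiling has at least one Λ1-free tile. Then the dimension of the minimal face of P_C^+(λ,μ) containing X equals the dimension of the kernel of the tiling matrix A_{M_C(X)}. -/

import Mathlib

open scoped BigOperators

namespace GT

/-- Index set 𝔙 = {(i,j) : 1 ≤ j ≤ i ≤ n}, encoded 0-based:
`p.val.1` is the (0-based) row, `p.val.2` the (0-based) column. -/
abbrev Idx (n : ℕ) := {p : Fin n × Fin n // p.2 ≤ p.1}

/-- Points of ℝ^{n(n+1)/2}, entries indexed by `Idx n`. -/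
abbrev Pattern (n : ℕ) := Idx n → ℝ

/-- A set of relations is a set of pairs of indices. -/
abbrev Rels (n : ℕ) := Set (Idx n × Idx n)

/-- `X` is a `C`-pattern iff `x_{ij} ≥ x_{rs}` for all `((i,j);(r,s)) ∈ C`. -/
def IsPattern {n : ℕ} (C : Rels n) (X : Pattern n) : Prop :=
  ∀ pr ∈ C, X pr.2 ≤ X pr.1

/-- The polyhedron `P_C` of all `C`-patterns. -/
def PC {n : ℕ} (C : Rels n) : Set (Pattern n) := {X | IsPattern C X}

/-- 0-based row of a vertex; paper row `i` corresponds to `row p = i - 1`,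
so the top row (paper row `n`) is `row p = n - 1`. -/
def row {n : ℕ} (p : Idx n) : ℕ := p.val.1.val

/-- `P_C(λ)` : `C`-patterns whose top row equals `λ`. -/
def PCl {n : ℕ} (C : Rels n) (lam : Fin n → ℝ) : Set (Pattern n) :=
  {X | IsPattern C X ∧ ∀ p : Idx n, row p = n - 1 → X p = lam p.val.2}

/-- `R_k(X) = Σ_{i=1}^k x_{ki}` (paper row `k` is 0-based row `k-1`). -/
def Rk {n : ℕ} (X : Pattern n) (k : Fin n) : ℝ :=
  ∑ j : Fin n, if h : j ≤ k then X ⟨(k, j), h⟩ else 0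

/-- The `k`-th weight map: `w_1(X) = x_{11}` and `w_k(X) = R_k(X) - R_{k-1}(X)`. -/
def wk {n : ℕ} (X : Pattern n) (k : Fin n) : ℝ :=
  Rk X k - (if _ : 0 < k.val then
    Rk X ⟨k.val - 1, Nat.lt_of_le_of_lt (Nat.sub_le _ _) k.isLt⟩ else 0)

/-- `P_C(λ,μ)` : elements of `P_C(λ)` with weights `μ`. -/
def PClm {n : ℕ} (C : Rels n) (lam mu : Fin n → ℝ) : Set (Pattern n) :=
  {X | X ∈ PCl C lam ∧ ∀ k : Fin n, wk X k = mu k}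

/-- Edges of the (undirected) graph `G(C)` along which the entries of `X` agree. -/
def edge {n : ℕ} (C : Rels n) (X : Pattern n) (p q : Idx n) : Prop :=
  ((p, q) ∈ C ∨ (q, p) ∈ C) ∧ X p = X q

/-- `(i,j)` and `(r,s)` are in the same tile of the tiling `M_C(X)` iff they are
joined by a walk in `G(C)` along which all entries of `X` are equal. -/
def sameTile {n : ℕ} (C : Rels n) (X : Pattern n) : Idx n → Idx n → Prop :=
  Relation.EqvGen (edge C X)

/-- The tile of `M_C(X)` containing `p`. -/
def tile {n : ℕ} (C : Rels n) (X : Pattern n) (p : Idx n) : Set (Idx n) :=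
  {q | sameTile C X p q}

/-- The set of tiles of the tiling `M_C(X)`. -/
def tiles {n : ℕ} (C : Rels n) (X : Pattern n) : Set (Set (Idx n)) :=
  {T | ∃ p, T = tile C X p}

/-- A tile is `Λ₁`-free if it contains no vertex in the top row `n`. -/
def L1free {n : ℕ} (T : Set (Idx n)) : Prop := ∀ q ∈ T, row q ≠ n - 1

/-- A tile is `Λ₂`-free if it contains no vertex in row `1` nor in the top row `n`. -/
def L2free {n : ℕ} (T : Set (Idx n)) : Prop := ∀ q ∈ T, row q ≠ n - 1 ∧ row q ≠ 0

/-- `D_X(P) = {Y : X + Y ∈ P and X - Y ∈ P}`. -/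
def DX {E : Type*} [AddCommGroup E] (P : Set E) (x : E) : Set E :=
  {y | x + y ∈ P ∧ x - y ∈ P}

/-- `𝔙(C)` : vertices that are source or target of a relation of `C`. -/
def VC {n : ℕ} (C : Rels n) : Set (Idx n) := {p | ∃ q, (p, q) ∈ C ∨ (q, p) ∈ C}

/-- Existence of a directed path in `G(C)`, i.e. `p ⪰_C q`. -/
def pathTo {n : ℕ} (C : Rels n) : Idx n → Idx n → Prop :=
  Relation.ReflTransGen (fun p q => (p, q) ∈ C)

/-- `C` is top-connected if every vertex of `𝔙(C)` not in the top row has a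
directed path to some vertex in the top row. -/
def TopConnected {n : ℕ} (C : Rels n) : Prop :=
  ∀ p ∈ VC C, row p ≠ n - 1 → ∃ r : Idx n, row r = n - 1 ∧ pathTo C p r

/-- `𝒫⁺` : points of `𝒫` with nonnegative entries on `𝔙(C)`. -/
def Pplus {n : ℕ} (C : Rels n) (P : Set (Pattern n)) : Set (Pattern n) :=
  {X ∈ P | ∀ p ∈ VC C, 0 ≤ X p}

section Faces

variable {E : Type*} [AddCommGroup E] [Module ℝ E]

/-- A polyhedron: an intersection of finitely many closed halfspaces. -/
def IsPolyhedron (P : Set E) : Prop :=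
  ∃ (k : ℕ) (f : Fin k → E →ₗ[ℝ] ℝ) (c : Fin k → ℝ), P = {x | ∀ i, f i x ≤ c i}

/-- A face of `P`: either `P` itself, or the intersection of `P` with a
supporting hyperplane. -/
def IsFace (P F : Set E) : Prop :=
  F = P ∨ ∃ (f : E →ₗ[ℝ] ℝ) (c : ℝ), f ≠ 0 ∧ (∀ x ∈ P, f x ≤ c) ∧
    (∃ x ∈ P, f x = c) ∧ F = {x ∈ P | f x = c}

/-- The dimension of a face: the dimension of its affine span. -/
noncomputable def faceDim (F : Set E) : ℕ :=
  Module.finrank ℝ (affineSpan ℝ F).direction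

/-- `F` is the minimal face of `P` containing `x`. -/
def IsMinFace (P F : Set E) (x : E) : Prop :=
  IsFace P F ∧ x ∈ F ∧ ∀ F', IsFace P F' → x ∈ F' → F ⊆ F'

end Faces

end GT

section Stmt16Aux

open GT

variable {n : ℕ}

lemma Rk_add (X Y : Pattern n) (k : Fin n) : Rk (X + Y) k = Rk X k + Rk Y k := by
  unfold Rk
  rw [← Finset.sum_add_distrib]
  refine Finset.sum_congr rfl fun j _ => ?_
  split <;> simp

lemma Rk_smul (r : ℝ) (X : Pattern n) (k : Fin n) : Rk (r • X) k = r * Rk X k := by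
  unfold Rk
  rw [Finset.mul_sum]
  refine Finset.sum_congr rfl fun j _ => ?_
  split <;> simp

lemma Rk_neg (X : Pattern n) (k : Fin n) : Rk (-X) k = -Rk X k := by
  have := Rk_smul (-1) X k
  simpa using this

lemma Rk_sub (X Y : Pattern n) (k : Fin n) : Rk (X - Y) k = Rk X k - Rk Y k := by
  rw [sub_eq_add_neg, Rk_add, Rk_neg, sub_eq_add_neg]

lemma wk_add (X Y : Pattern n) (k : Fin n) : wk (X + Y) k = wk X k + wk Y k := by
  unfold wk
  split <;> rw [Rk_add] <;> [rw [Rk_add]; skip] <;> ring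

lemma wk_smul (r : ℝ) (X : Pattern n) (k : Fin n) : wk (r • X) k = r * wk X k := by
  unfold wk
  split <;> rw [Rk_smul] <;> [rw [Rk_smul]; skip] <;> ring

lemma wk_sub (X Y : Pattern n) (k : Fin n) : wk (X - Y) k = wk X k - wk Y k := by
  unfold wk
  split <;> rw [Rk_sub] <;> [rw [Rk_sub]; skip] <;> ring

/-- `R_k` as a sum over all vertices of the given row. -/
lemma sum_row (i : Fin n) (f : Idx n → ℝ) :
    (∑ j : Fin n, if h : j ≤ i then f ⟨(i, j), h⟩ else 0)
      = ∑ p : Idx n, if row p = i.val then f p else 0 := by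
  classical
  rw [← Finset.sum_filter (fun p : Idx n => row p = i.val) f]
  rw [show (∑ j : Fin n, if h : j ≤ i then f ⟨(i, j), h⟩ else 0)
      = ∑ j ∈ Finset.univ.filter (fun j : Fin n => j ≤ i),
          if h : j ≤ i then f ⟨(i, j), h⟩ else 0 from
    (Finset.sum_filter_of_ne (fun j _ hj => by
      by_contra h
      exact hj (dif_neg h))).symm]
  refine Finset.sum_bij' (fun j hj => (⟨(i, j), (Finset.mem_filter.mp hj).2⟩ : Idx n))
    (fun p _ => p.1.2) ?_ ?_ ?_ ?_ ?_
  · intro j hj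
    exact Finset.mem_filter.mpr ⟨Finset.mem_univ _, rfl⟩
  · intro p hp
    have hrow : p.1.1 = i := Fin.ext (Finset.mem_filter.mp hp).2
    simp only [Finset.mem_filter, Finset.mem_univ, true_and]
    exact hrow ▸ p.2
  · intro j hj
    rfl
  · intro p hp
    have hrow : p.1.1 = i := Fin.ext (Finset.mem_filter.mp hp).2
    exact Subtype.ext (Prod.ext hrow.symm rfl)
  · intro j hj
    exact dif_pos (Finset.mem_filter.mp hj).2

lemma Rk_eq_sum_row (X : Pattern n) (k : Fin n) :
    Rk X k = ∑ p : Idx n, if row p = k.val then X p else 0 :=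
  sum_row k X

lemma sameTile_refl (C : Rels n) (X : Pattern n) (p : Idx n) : sameTile C X p p :=
  Relation.EqvGen.refl p

lemma sameTile_symm {C : Rels n} {X : Pattern n} {p q : Idx n}
    (h : sameTile C X p q) : sameTile C X q p :=
  Relation.EqvGen.symm p q h

lemma sameTile_trans {C : Rels n} {X : Pattern n} {p q r : Idx n}
    (h : sameTile C X p q) (h' : sameTile C X q r) : sameTile C X p r :=
  Relation.EqvGen.trans p q r h h'

lemma tile_eq_of_sameTile {C : Rels n} {X : Pattern n} {p q : Idx n}
    (h : sameTile C X p q) : tile C X p = tile C X q := by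
  ext r
  exact ⟨fun hr => sameTile_trans (sameTile_symm h) hr, fun hr => sameTile_trans h hr⟩

lemma mem_tile_self (C : Rels n) (X : Pattern n) (p : Idx n) : p ∈ tile C X p :=
  sameTile_refl C X p

/-- Functions satisfying the tight-relation condition are constant on tiles. -/
lemma const_of_sameTile {C : Rels n} {X : Pattern n} {Y : Pattern n}
    (hY : ∀ pr ∈ C, X pr.2 = X pr.1 → Y pr.2 = Y pr.1) {p q : Idx n}
    (h : sameTile C X p q) : Y p = Y q := by
  induction h with
  | rel a b hab =>
    rcases hab.1 with h1 | h1
    · exact (hY (a, b) h1 hab.2.symm).symm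
    · exact hY (b, a) h1 hab.2
  | refl a => rfl
  | symm a b _ ih => exact ih.symm
  | trans a b c _ _ ih1 ih2 => exact ih1.trans ih2

/-- If `X p = 0` for `p ∈ 𝔙(C)`, then the tile of `p` reaches the top row. -/
lemma zero_tile {C : Rels n} {X : Pattern n} (htc : TopConnected C)
    (hpat : IsPattern C X) (hnn : ∀ p ∈ VC C, 0 ≤ X p) {p : Idx n}
    (hp : p ∈ VC C) (h0 : X p = 0) :
    ∃ r : Idx n, row r = n - 1 ∧ sameTile C X p r := by
  by_cases hrow : row p = n - 1
  · exact ⟨p, hrow, sameTile_refl C X p⟩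
  obtain ⟨r, hr, hpath⟩ := htc p hp hrow
  refine ⟨r, hr, ?_⟩
  have key : ∀ q : Idx n, GT.pathTo C p q → sameTile C X p q ∧ X q = 0 := by
    intro q hq
    induction hq with
    | refl => exact ⟨sameTile_refl C X p, h0⟩
    | @tail b c _ hbc ih =>
      have hcV : c ∈ VC C := ⟨b, Or.inr hbc⟩
      have hc1 : X c ≤ X b := hpat (b, c) hbc
      have hc0 : X c = 0 := le_antisymm (ih.2 ▸ hc1) (hnn c hcV)
      have he : GT.edge C X b c := ⟨Or.inl hbc, by rw [ih.2, hc0]⟩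
      exact ⟨sameTile_trans ih.1 (Relation.EqvGen.rel b c he), hc0⟩
  exact (key r hpath).1

/-- The submodule of feasible directions at `X`. -/
def Wsub (C : Rels n) (X : Pattern n) : Submodule ℝ (Pattern n) where
  carrier := {Y | (∀ pr ∈ C, X pr.2 = X pr.1 → Y pr.2 = Y pr.1) ∧
      (∀ p ∈ VC C, X p = 0 → Y p = 0) ∧
      (∀ p : Idx n, row p = n - 1 → Y p = 0) ∧
      (∀ k : Fin n, wk Y k = 0)}
  add_mem' := by
    rintro Y Z ⟨h1, h2, h3, h4⟩ ⟨g1, g2, g3, g4⟩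
    refine ⟨fun pr hpr ht => ?_, fun p hp h0 => ?_, fun p hp => ?_, fun k => ?_⟩
    · simp only [Pi.add_apply, h1 pr hpr ht, g1 pr hpr ht]
    · simp only [Pi.add_apply, h2 p hp h0, g2 p hp h0, add_zero]
    · simp only [Pi.add_apply, h3 p hp, g3 p hp, add_zero]
    · rw [wk_add, h4 k, g4 k, add_zero]
  zero_mem' := by
    refine ⟨fun pr _ _ => rfl, fun p _ _ => rfl, fun p _ => rfl, fun k => ?_⟩
    have : wk ((0 : ℝ) • (0 : Pattern n)) k = 0 * wk (0 : Pattern n) k := wk_smul 0 0 k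
    simpa using this
  smul_mem' := by
    rintro r Y ⟨h1, h2, h3, h4⟩
    refine ⟨fun pr hpr ht => ?_, fun p hp h0 => ?_, fun p hp => ?_, fun k => ?_⟩
    · simp only [Pi.smul_apply, h1 pr hpr ht]
    · simp only [Pi.smul_apply, h2 p hp h0, smul_zero]
    · simp only [Pi.smul_apply, h3 p hp, smul_zero]
    · rw [wk_smul, h4 k, mul_zero]

lemma Rk_zero_of_wk {Y : Pattern n} (h : ∀ k : Fin n, wk Y k = 0) :
    ∀ k : Fin n, Rk Y k = 0 := by
  suffices H : ∀ m : ℕ, ∀ hm : m < n, Rk Y ⟨m, hm⟩ = 0 by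
    intro k
    have := H k.val k.isLt
    simpa using this
  intro m
  induction m with
  | zero =>
    intro hm
    have h0 := h ⟨0, hm⟩
    rw [wk, dif_neg (by simp)] at h0
    simpa using h0
  | succ m ih =>
    intro hm
    have hm' : m < n := Nat.lt_of_succ_lt hm
    have h0 := h ⟨m + 1, hm⟩
    rw [wk, dif_pos (by simp)] at h0
    have hidx : (⟨(m + 1 : ℕ) - 1, Nat.lt_of_le_of_lt (Nat.sub_le _ _) hm⟩ : Fin n)
        = ⟨m, hm'⟩ := by
      apply Fin.ext
      simp
    rw [hidx, ih hm'] at h0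
    linarith

open Classical in
/-- The linear map sending tile values to the corresponding pattern. -/
noncomputable def PhiMap {s : ℕ} (M : Fin s → Set (Idx n)) :
    (Fin s → ℝ) →ₗ[ℝ] Pattern n where
  toFun c := fun p => ∑ k, if p ∈ M k then c k else 0
  map_add' c d := by
    funext p
    show (∑ k, if p ∈ M k then (c + d) k else 0)
        = (∑ k, if p ∈ M k then c k else 0) + (∑ k, if p ∈ M k then d k else 0)
    rw [← Finset.sum_add_distrib]
    exact Finset.sum_congr rfl fun k _ => by split <;> simp
  map_smul' r c := by
    funext p
    show (∑ k, if p ∈ M k then (r • c) k else 0)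
        = r * ∑ k, if p ∈ M k then c k else 0
    rw [Finset.mul_sum]
    exact Finset.sum_congr rfl fun k _ => by split <;> simp

open Classical in
lemma PhiMap_apply {s : ℕ} (M : Fin s → Set (Idx n)) (c : Fin s → ℝ) (p : Idx n) :
    PhiMap M c p = ∑ k, if p ∈ M k then c k else 0 := rfl

open Classical in
lemma ncard_eq_card_filter (P : Idx n → Prop) :
    ({p : Idx n | P p}).ncard = (Finset.univ.filter P).card := by
  rw [Set.ncard_eq_toFinset_card' {p : Idx n | P p}, Set.toFinset_setOf]

open Classical in
lemma Rk_PhiMap {s : ℕ} (M : Fin s → Set (Idx n)) (c : Fin s → ℝ) (i : Fin n) :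
    Rk (PhiMap M c) i
      = ∑ k, ({p : Idx n | row p = i.val ∧ p ∈ M k}.ncard : ℝ) * c k := by
  rw [Rk_eq_sum_row]
  have step1 : (∑ p : Idx n, if row p = i.val then PhiMap M c p else 0)
      = ∑ p : Idx n, ∑ k, if row p = i.val ∧ p ∈ M k then c k else 0 := by
    refine Finset.sum_congr rfl fun p _ => ?_
    by_cases h : row p = i.val
    · rw [if_pos h, PhiMap_apply]
      refine Finset.sum_congr rfl fun k _ => ?_
      simp [h]
    · rw [if_neg h]
      symm
      refine Finset.sum_eq_zero fun k _ => ?_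
      simp [h]
  rw [step1, Finset.sum_comm]
  refine Finset.sum_congr rfl fun k _ => ?_
  rw [ncard_eq_card_filter (fun p => row p = i.val ∧ p ∈ M k)]
  rw [← Finset.sum_filter, Finset.sum_const, nsmul_eq_mul]
  congr 1
  norm_cast
  exact Finset.card_bij (fun a _ => a) (fun a ha => by simpa using ha)
    (fun _ _ _ _ h => h) (fun b hb => ⟨b, by simpa using hb, rfl⟩)

/-- Arithmetic helper for the choice of ε. -/
lemma eps_bound {ε a d : ℝ} (ha : 0 ≤ a) (hε0 : 0 ≤ ε) (hε : ε ≤ d / (a + 1)) :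
    ε * a ≤ d := by
  have h1 : (0 : ℝ) < a + 1 := by linarith
  have h2 : ε * (a + 1) ≤ d := (le_div_iff₀ h1).mp hε
  nlinarith

lemma perturb_mem {C : Rels n} {X Y : Pattern n} {lam mu : Fin n → ℝ} {ε : ℝ}
    (hX : X ∈ Pplus C (PClm C lam mu)) (hY : Y ∈ Wsub C X) (hε0 : 0 ≤ ε)
    (hb1 : ∀ pr ∈ C, X pr.2 < X pr.1 → ε * |Y pr.1 - Y pr.2| ≤ X pr.1 - X pr.2)
    (hb2 : ∀ p ∈ VC C, 0 < X p → ε * |Y p| ≤ X p) :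
    X + ε • Y ∈ Pplus C (PClm C lam mu) := by
  obtain ⟨⟨⟨hpat, htop⟩, hw⟩, hnn⟩ := hX
  obtain ⟨h1, h2, h3, h4⟩ := hY
  refine ⟨⟨⟨?_, ?_⟩, ?_⟩, ?_⟩
  · intro pr hpr
    have hle := hpat pr hpr
    rcases eq_or_lt_of_le hle with heq | hlt
    · have hy := h1 pr hpr heq
      simp only [Pi.add_apply, Pi.smul_apply, smul_eq_mul]
      rw [heq, hy]
    · have hb := hb1 pr hpr hlt
      have habs : Y pr.2 - Y pr.1 ≤ |Y pr.1 - Y pr.2| := by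
        rw [abs_sub_comm]; exact le_abs_self _
      have hm : ε * (Y pr.2 - Y pr.1) ≤ ε * |Y pr.1 - Y pr.2| :=
        mul_le_mul_of_nonneg_left habs hε0
      simp only [Pi.add_apply, Pi.smul_apply, smul_eq_mul]
      nlinarith
  · intro p hp
    simp only [Pi.add_apply, Pi.smul_apply, smul_eq_mul]
    rw [htop p hp, h3 p hp, mul_zero, add_zero]
  · intro k
    rw [wk_add, hw k]
    have hsm : wk (ε • Y) k = ε * wk Y k := wk_smul ε Y k
    rw [hsm, h4 k, mul_zero, add_zero]
  · intro p hp
    rcases (hnn p hp).eq_or_lt with heq | hlt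
    · simp only [Pi.add_apply, Pi.smul_apply, smul_eq_mul]
      rw [← heq, h2 p hp heq.symm, mul_zero, add_zero]
    · have hb := hb2 p hp hlt
      have hm : ε * (-|Y p|) ≤ ε * Y p := mul_le_mul_of_nonneg_left (neg_abs_le _) hε0
      rw [mul_neg] at hm
      simp only [Pi.add_apply, Pi.smul_apply, smul_eq_mul]
      linarith

lemma exists_eps {C : Rels n} (X Y : Pattern n) :
    ∃ ε : ℝ, 0 < ε ∧
      (∀ pr ∈ C, X pr.2 < X pr.1 → ε * |Y pr.1 - Y pr.2| ≤ X pr.1 - X pr.2) ∧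
      (∀ p ∈ VC C, 0 < X p → ε * |Y p| ≤ X p) := by
  classical
  set S : Finset ℝ :=
    insert 1 (((Finset.univ.filter (fun pr : Idx n × Idx n => pr ∈ C ∧ X pr.2 < X pr.1)).image
        (fun pr => (X pr.1 - X pr.2) / (|Y pr.1 - Y pr.2| + 1))) ∪
      ((Finset.univ.filter (fun p : Idx n => p ∈ VC C ∧ 0 < X p)).image
        (fun p => X p / (|Y p| + 1)))) with hS
  have hne : S.Nonempty := ⟨1, Finset.mem_insert_self _ _⟩
  have hpos : ∀ x ∈ S, 0 < x := by
    intro x hx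
    rw [hS, Finset.mem_insert] at hx
    rcases hx with rfl | hx
    · norm_num
    rcases Finset.mem_union.mp hx with hx | hx
    · obtain ⟨pr, hpr, rfl⟩ := Finset.mem_image.mp hx
      have h2 := (Finset.mem_filter.mp hpr).2
      have h1 : (0:ℝ) < |Y pr.1 - Y pr.2| + 1 := by positivity
      exact div_pos (by linarith [h2.2]) h1
    · obtain ⟨p, hp, rfl⟩ := Finset.mem_image.mp hx
      have h2 := (Finset.mem_filter.mp hp).2
      have h1 : (0:ℝ) < |Y p| + 1 := by positivity
      exact div_pos h2.2 h1
  have hε0 : 0 < S.min' hne := hpos _ (S.min'_mem hne)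
  refine ⟨S.min' hne, hε0, ?_, ?_⟩
  · intro pr hpr hlt
    have hmem : (X pr.1 - X pr.2) / (|Y pr.1 - Y pr.2| + 1) ∈ S := by
      rw [hS]
      exact Finset.mem_insert_of_mem (Finset.mem_union_left _
        (Finset.mem_image_of_mem _ (Finset.mem_filter.mpr ⟨Finset.mem_univ _, hpr, hlt⟩)))
    exact eps_bound (abs_nonneg _) hε0.le (S.min'_le _ hmem)
  · intro p hp h0
    have hmem : X p / (|Y p| + 1) ∈ S := by
      rw [hS]
      exact Finset.mem_insert_of_mem (Finset.mem_union_right _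
        (Finset.mem_image_of_mem _ (Finset.mem_filter.mpr ⟨Finset.mem_univ _, hp, h0⟩)))
    exact eps_bound (abs_nonneg _) hε0.le (S.min'_le _ hmem)

lemma mem_face_of_pm {E : Type*} [AddCommGroup E] [Module ℝ E] {P F : Set E} {x z : E}
    (hface : GT.IsFace P F) (hxF : x ∈ F) (ha : x + z ∈ P) (hb : x - z ∈ P) :
    x + z ∈ F ∧ x - z ∈ F := by
  rcases hface with rfl | ⟨f, c, -, hbd, -, rfl⟩
  · exact ⟨ha, hb⟩
  · obtain ⟨hxP, hxc⟩ := hxF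
    have h1 : f (x + z) ≤ c := hbd _ ha
    have h2 : f (x - z) ≤ c := hbd _ hb
    have h3 : f (x + z) + f (x - z) = 2 * c := by
      rw [map_add, map_sub]
      linarith
    exact ⟨⟨ha, by linarith⟩, ⟨hb, by linarith⟩⟩

open Classical in
/-- The sum of all constraint functionals tight at `X`. -/
noncomputable def tightF (C : Rels n) (X : Pattern n) : Pattern n →ₗ[ℝ] ℝ :=
  (∑ pr ∈ Finset.univ.filter (fun pr : Idx n × Idx n => pr ∈ C ∧ X pr.2 = X pr.1),
      ((LinearMap.proj pr.2 : Pattern n →ₗ[ℝ] ℝ) - (LinearMap.proj pr.1 : Pattern n →ₗ[ℝ] ℝ)))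
  + ∑ p ∈ Finset.univ.filter (fun p : Idx n => p ∈ VC C ∧ X p = 0),
      (-(LinearMap.proj p : Pattern n →ₗ[ℝ] ℝ))

open Classical in
lemma tightF_apply (C : Rels n) (X Y : Pattern n) :
    tightF C X Y
      = (∑ pr ∈ Finset.univ.filter (fun pr : Idx n × Idx n => pr ∈ C ∧ X pr.2 = X pr.1),
          (Y pr.2 - Y pr.1))
        + ∑ p ∈ Finset.univ.filter (fun p : Idx n => p ∈ VC C ∧ X p = 0), -(Y p) := by
  simp [tightF, LinearMap.sum_apply, LinearMap.sub_apply, LinearMap.neg_apply,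
    LinearMap.proj_apply, Finset.sum_sub_distrib]

end Stmt16Aux

/-- for a top-connected `C` and `X ∈ P_C⁺(λ,μ)` whose tiling has
at least one `Λ₁`-free tile, the dimension of the minimal face of `P_C⁺(λ,μ)`
containing `X` equals the dimension of the kernel of the tiling matrix. -/
theorem stmt16 {n : ℕ} (C : GT.Rels n) (htc : GT.TopConnected C)
    (X : GT.Pattern n) (lam mu : Fin n → ℝ)
    (hX : X ∈ GT.Pplus C (GT.PClm C lam mu))
    (hlam : ∀ p : GT.Idx n, GT.row p = n - 1 → X p = lam p.val.2)
    (hmu : ∀ k : Fin n, GT.wk X k = mu k)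
    (s : ℕ) (hs : 0 < s) (M : Fin s → Set (GT.Idx n)) (hMinj : Function.Injective M)
    (hM : ∀ k, M k ∈ GT.tiles C X ∧ GT.L1free (M k))
    (hMall : ∀ T ∈ GT.tiles C X, GT.L1free T → ∃ k, T = M k)
    (A : Matrix (Fin (n - 1)) (Fin s) ℝ)
    (hA : ∀ i k, A i k = ({p : GT.Idx n | GT.row p = i.val ∧ p ∈ M k}.ncard : ℝ))
    (F : Set (GT.Pattern n))
    (hF : GT.IsMinFace (GT.Pplus C (GT.PClm C lam mu)) F X) :
    GT.faceDim F = Module.finrank ℝ (LinearMap.ker A.mulVecLin) := by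
  classical
  rcases Nat.eq_zero_or_pos n with hn0 | hn
  · obtain ⟨p, -⟩ := (hM ⟨0, hs⟩).1
    exact absurd p.1.1.isLt (by omega)
  set P := GT.Pplus C (GT.PClm C lam mu) with hPdef
  -- basic facts about tiles
  have hMk_tile : ∀ (k) (p : GT.Idx n), p ∈ M k ↔ GT.tile C X p = M k := by
    intro k p
    obtain ⟨q, hq⟩ := (hM k).1
    constructor
    · intro hp
      rw [hq] at hp ⊢
      exact (tile_eq_of_sameTile hp).symm
    · intro ht
      rw [← ht]
      exact mem_tile_self C X p
  have hdisj : ∀ (p : GT.Idx n) (k l), p ∈ M k → p ∈ M l → k = l := fun p k l hk hl =>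
    hMinj (((hMk_tile k p).1 hk).symm.trans ((hMk_tile l p).1 hl))
  have hpt : ∀ k, ∃ p, p ∈ M k := by
    intro k
    obtain ⟨q, hq⟩ := (hM k).1
    exact ⟨q, hq ▸ mem_tile_self C X q⟩
  choose pt hptmem using hpt
  have hXpat : GT.IsPattern C X := hX.1.1.1
  have hXnn : ∀ p ∈ GT.VC C, 0 ≤ X p := hX.2
  have hnotin_top : ∀ p : GT.Idx n, GT.row p = n - 1 → ∀ k, p ∉ M k :=
    fun p hp k hmem => (hM k).2 p hmem hp
  have hzero_notin : ∀ p ∈ GT.VC C, X p = 0 → ∀ k, p ∉ M k := by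
    intro p hp h0 k hmem
    obtain ⟨r, hr, hst⟩ := zero_tile htc hXpat hXnn hp h0
    have hrmem : r ∈ M k := by
      rw [← (hMk_tile k p).1 hmem]
      exact hst
    exact (hM k).2 r hrmem hr
  -- PhiMap evaluation lemmas
  have hPhi_single : ∀ (c : Fin s → ℝ) (k) (p : GT.Idx n), p ∈ M k → PhiMap M c p = c k := by
    intro c k p hp
    rw [PhiMap_apply]
    exact (Finset.sum_eq_single k
      (fun l _ hl => if_neg fun hmem => hl (hdisj p l k hmem hp))
      (fun h => absurd (Finset.mem_univ k) h)).trans (if_pos hp)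
  have hPhi_notin : ∀ (c : Fin s → ℝ) (p : GT.Idx n), (∀ k, p ∉ M k) → PhiMap M c p = 0 := by
    intro c p hp
    rw [PhiMap_apply]
    exact Finset.sum_eq_zero fun k _ => if_neg (hp k)
  -- Rk of PhiMap via the matrix A
  have hRkPhi : ∀ (c : Fin s → ℝ) (i : Fin n) (hi : i.val < n - 1),
      GT.Rk (PhiMap M c) i = A.mulVec c ⟨i.val, hi⟩ := by
    intro c i hi
    rw [Rk_PhiMap, Matrix.mulVec, dotProduct]
    refine Finset.sum_congr rfl fun k _ => ?_
    rw [hA ⟨i.val, hi⟩ k]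
  have hRkPhi_top : ∀ (c : Fin s → ℝ) (i : Fin n), i.val = n - 1 →
      GT.Rk (PhiMap M c) i = 0 := by
    intro c i hi
    rw [Rk_eq_sum_row]
    refine Finset.sum_eq_zero fun p _ => ?_
    by_cases h : GT.row p = i.val
    · rw [if_pos h, hPhi_notin c p fun k => hnotin_top p (h.trans hi) k]
    · rw [if_neg h]
  have hRkPhi_zero : ∀ c : Fin s → ℝ, A.mulVec c = 0 → ∀ i : Fin n,
      GT.Rk (PhiMap M c) i = 0 := by
    intro c hc i
    rcases lt_or_ge i.val (n - 1) with hi | hi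
    · rw [hRkPhi c i hi, hc]
      rfl
    · have hi' : i.val = n - 1 := by
        have := i.isLt
        omega
      exact hRkPhi_top c i hi'
  have hwkPhi : ∀ c : Fin s → ℝ, A.mulVec c = 0 → ∀ k, GT.wk (PhiMap M c) k = 0 := by
    intro c hc k
    rw [GT.wk]
    split
    · rw [hRkPhi_zero c hc, hRkPhi_zero c hc]
      ring
    · rw [hRkPhi_zero c hc]
      ring
  -- PhiMap maps ker A into Wsub
  have hPhiW : ∀ c : Fin s → ℝ, A.mulVec c = 0 → PhiMap M c ∈ Wsub C X := by
    intro c hc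
    refine ⟨?_, ?_, ?_, hwkPhi c hc⟩
    · intro pr hpr ht
      have hst : GT.sameTile C X pr.1 pr.2 := Relation.EqvGen.rel _ _ ⟨Or.inl hpr, ht.symm⟩
      have hiff : ∀ k, (pr.1 ∈ M k ↔ pr.2 ∈ M k) := by
        intro k
        rw [hMk_tile, hMk_tile, tile_eq_of_sameTile hst]
      rw [PhiMap_apply, PhiMap_apply]
      exact Finset.sum_congr rfl fun k _ => if_congr (hiff k).symm rfl rfl
    · intro p hp h0
      exact hPhi_notin c p (hzero_notin p hp h0)
    · intro p hp
      exact hPhi_notin c p (hnotin_top p hp)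
  -- the linear equivalence between ker A and Wsub
  have hkerVec : ∀ c ∈ LinearMap.ker A.mulVecLin, A.mulVec c = 0 := by
    intro c hc
    rwa [LinearMap.mem_ker, Matrix.mulVecLin_apply] at hc
  set Ψ : LinearMap.ker A.mulVecLin →ₗ[ℝ] (Wsub C X) :=
    LinearMap.codRestrict (Wsub C X)
      ((PhiMap M).comp (LinearMap.ker A.mulVecLin).subtype)
      (fun c => hPhiW c.1 (hkerVec c.1 c.2)) with hΨdef
  have hΨval : ∀ c, ((Ψ c : GT.Pattern n)) = PhiMap M c.1 := fun c => rfl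
  have hΨbij : Function.Bijective Ψ := by
    constructor
    · intro a b hab
      apply Subtype.ext
      funext k
      have h1 : PhiMap M a.1 = PhiMap M b.1 := by
        rw [← hΨval a, ← hΨval b, hab]
      have h2 := congrFun h1 (pt k)
      rwa [hPhi_single a.1 k _ (hptmem k), hPhi_single b.1 k _ (hptmem k)] at h2
    · rintro ⟨Y, hY⟩
      set c : Fin s → ℝ := fun k => Y (pt k) with hcdef
      have hYconst : ∀ p q, GT.sameTile C X p q → Y p = Y q :=
        fun p q h => const_of_sameTile hY.1 h
      have hPhiY : PhiMap M c = Y := by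
        funext p
        by_cases hp : ∃ k, p ∈ M k
        · obtain ⟨k, hk⟩ := hp
          rw [hPhi_single c k p hk]
          have hst : GT.sameTile C X (pt k) p := by
            have h1 : GT.tile C X (pt k) = M k := (hMk_tile k _).1 (hptmem k)
            rw [← h1] at hk
            exact hk
          exact hYconst _ _ hst
        · push_neg at hp
          rw [hPhi_notin c p hp]
          by_cases hr : GT.row p = n - 1
          · exact (hY.2.2.1 p hr).symm
          · have hnl : ¬ GT.L1free (GT.tile C X p) := by
              intro hL
              obtain ⟨k, hk⟩ := hMall _ ⟨p, rfl⟩ hL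
              exact hp k (hk ▸ mem_tile_self C X p)
            rw [GT.L1free] at hnl
            push_neg at hnl
            obtain ⟨r, hrT, hr2⟩ := hnl
            rw [hYconst p r hrT, hY.2.2.1 r hr2]
      have hcK : c ∈ LinearMap.ker A.mulVecLin := by
        rw [LinearMap.mem_ker]
        funext i
        rw [Matrix.mulVecLin_apply]
        have hi : (i.val : ℕ) < n := lt_of_lt_of_le i.isLt (Nat.sub_le n 1)
        have h2 : A.mulVec c i = GT.Rk (PhiMap M c) ⟨i.val, hi⟩ := by
          rw [hRkPhi c ⟨i.val, hi⟩ i.isLt]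
        rw [Pi.zero_apply, h2, hPhiY]
        exact Rk_zero_of_wk hY.2.2.2 _
      exact ⟨⟨c, hcK⟩, Subtype.ext hPhiY⟩
  -- computation of the direction of the minimal face
  have hdirW : (affineSpan ℝ F).direction = Wsub C X := by
    rw [direction_affineSpan]
    apply le_antisymm
    · -- vectorSpan F ≤ Wsub via the tight face F0
      set f := tightF C X with hfdef
      have hbd : ∀ y ∈ P, f y ≤ 0 := by
        intro y hy
        rw [hfdef, tightF_apply]
        have hs1 : (∑ pr ∈ Finset.univ.filter
            (fun pr : GT.Idx n × GT.Idx n => pr ∈ C ∧ X pr.2 = X pr.1), (y pr.2 - y pr.1)) ≤ 0 := by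
          refine Finset.sum_nonpos fun pr hpr => ?_
          have hm := (Finset.mem_filter.mp hpr).2.1
          have h2 := hy.1.1.1 pr hm
          linarith
        have hs2 : (∑ p ∈ Finset.univ.filter
            (fun p : GT.Idx n => p ∈ GT.VC C ∧ X p = 0), -(y p)) ≤ 0 := by
          refine Finset.sum_nonpos fun p hp => ?_
          have hm := (Finset.mem_filter.mp hp).2.1
          have h2 := hy.2 p hm
          linarith
        linarith
      have hfX : f X = 0 := by
        rw [hfdef, tightF_apply]
        rw [Finset.sum_eq_zero (fun pr hpr => by
            rw [(Finset.mem_filter.mp hpr).2.2]; ring),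
          Finset.sum_eq_zero (fun p hp => by
            rw [(Finset.mem_filter.mp hp).2.2]; ring)]
        ring
      set F0 : Set (GT.Pattern n) := {y ∈ P | f y = 0} with hF0def
      have hF0face : GT.IsFace P F0 := by
        by_cases hf0 : f = 0
        · left
          rw [hF0def]
          ext y
          simp [hf0]
        · right
          exact ⟨f, 0, hf0, hbd, ⟨X, hX, hfX⟩, rfl⟩
      have hFsub : F ⊆ F0 := hF.2.2 F0 hF0face ⟨hX, hfX⟩
      have hkey : ∀ y ∈ F0, y - X ∈ Wsub C X := by
        intro y hy
        obtain ⟨hyP, hyf⟩ := hy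
        have hA1 : ∀ pr ∈ Finset.univ.filter
            (fun pr : GT.Idx n × GT.Idx n => pr ∈ C ∧ X pr.2 = X pr.1), y pr.2 - y pr.1 ≤ 0 := by
          intro pr hpr
          have hm := (Finset.mem_filter.mp hpr).2.1
          have h2 := hyP.1.1.1 pr hm
          linarith
        have hA2 : ∀ p ∈ Finset.univ.filter
            (fun p : GT.Idx n => p ∈ GT.VC C ∧ X p = 0), -(y p) ≤ 0 := by
          intro p hp
          have hm := (Finset.mem_filter.mp hp).2.1
          have h2 := hyP.2 p hm
          linarith
        rw [hfdef, tightF_apply] at hyf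
        have hS1 : (∑ pr ∈ Finset.univ.filter
            (fun pr : GT.Idx n × GT.Idx n => pr ∈ C ∧ X pr.2 = X pr.1), (y pr.2 - y pr.1)) = 0 := by
          have h1 := Finset.sum_nonpos hA1
          have h2 := Finset.sum_nonpos hA2
          linarith
        have hS2 : (∑ p ∈ Finset.univ.filter
            (fun p : GT.Idx n => p ∈ GT.VC C ∧ X p = 0), -(y p)) = 0 := by
          have h1 := Finset.sum_nonpos hA1
          have h2 := Finset.sum_nonpos hA2
          linarith
        have hpt1 := (Finset.sum_eq_zero_iff_of_nonpos hA1).mp hS1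
        have hpt2 := (Finset.sum_eq_zero_iff_of_nonpos hA2).mp hS2
        refine ⟨?_, ?_, ?_, ?_⟩
        · intro pr hpr ht
          have hm : pr ∈ Finset.univ.filter
              (fun pr : GT.Idx n × GT.Idx n => pr ∈ C ∧ X pr.2 = X pr.1) :=
            Finset.mem_filter.mpr ⟨Finset.mem_univ _, hpr, ht⟩
          have h2 := hpt1 pr hm
          simp only [Pi.sub_apply]
          linarith [ht]
        · intro p hp h0
          have hm : p ∈ Finset.univ.filter
              (fun p : GT.Idx n => p ∈ GT.VC C ∧ X p = 0) :=
            Finset.mem_filter.mpr ⟨Finset.mem_univ _, hp, h0⟩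
          have h2 := hpt2 p hm
          simp only [Pi.sub_apply]
          linarith [h0]
        · intro p hp
          simp only [Pi.sub_apply]
          rw [hyP.1.1.2 p hp, hlam p hp, sub_self]
        · intro k
          rw [wk_sub, hyP.1.2 k, hmu k, sub_self]
      rw [vectorSpan_def]
      apply Submodule.span_le.mpr
      rintro v ⟨a, ha, b, hb, rfl⟩
      have h1 := hkey a (hFsub ha)
      have h2 := hkey b (hFsub hb)
      show a -ᵥ b ∈ (Wsub C X : Set (GT.Pattern n))
      have hab : a -ᵥ b = (a - X) - (b - X) := by
        rw [vsub_eq_sub]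
        abel
      rw [hab]
      exact Submodule.sub_mem _ h1 h2
    · -- Wsub ≤ vectorSpan F
      intro Y hY
      obtain ⟨ε, hε, hb1, hb2⟩ := exists_eps (C := C) X Y
      have hmem1 : X + ε • Y ∈ P := perturb_mem hX hY hε.le hb1 hb2
      have hmem2 : X - ε • Y ∈ P := by
        have hY' : -Y ∈ Wsub C X := neg_mem hY
        have hb1' : ∀ pr ∈ C, X pr.2 < X pr.1 →
            ε * |(-Y) pr.1 - (-Y) pr.2| ≤ X pr.1 - X pr.2 := by
          intro pr hpr hlt
          have h2 := hb1 pr hpr hlt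
          have habs : |(-Y) pr.1 - (-Y) pr.2| = |Y pr.1 - Y pr.2| := by
            simp only [Pi.neg_apply]
            rw [show -Y pr.1 - -Y pr.2 = -(Y pr.1 - Y pr.2) by ring, abs_neg]
          rwa [habs]
        have hb2' : ∀ p ∈ GT.VC C, 0 < X p → ε * |(-Y) p| ≤ X p := by
          intro p hp h0
          have h2 := hb2 p hp h0
          simp only [Pi.neg_apply, abs_neg]
          exact h2
        have h3 := perturb_mem hX hY' hε.le hb1' hb2'
        rwa [smul_neg, ← sub_eq_add_neg] at h3
      obtain ⟨hf1, hf2⟩ := mem_face_of_pm hF.1 hF.2.1 hmem1 hmem2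
      have hv : (X + ε • Y) -ᵥ X ∈ vectorSpan ℝ F := vsub_mem_vectorSpan ℝ hf1 hF.2.1
      have heq : (X + ε • Y) -ᵥ X = ε • Y := by
        rw [vsub_eq_sub]
        abel
      rw [heq] at hv
      have h4 := Submodule.smul_mem _ ε⁻¹ hv
      rwa [smul_smul, inv_mul_cancel₀ (ne_of_gt hε), one_smul] at h4
  show Module.finrank ℝ (affineSpan ℝ F).direction = _
  rw [hdirW]
  exact (LinearEquiv.finrank_eq (LinearEquiv.ofBijective Ψ hΨbij)).symm
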